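/- arXiv:0706.1785 — 2 statements merged into one kernel-verified Lean document; each statement's English description precedes it below -/
import Mathlib

section
/- Let S = {j_1, …, j_m} be an su(2) block for ψ. Then for each l ∈ {1, …, m} there exist U_{j_l}, V_{j_l}, W_{j_l} ∈ su(2) satisfying the bracket relations [U_{j_l}, V_{j_l}] = W_{j_l}, [V_{j_l}, W_{j_l}] = U_{j_l}, [W_{j_l}, U_{j_l}] = V_{j_l}, such that the three elements of g_S whose component at qubit j_l is U_{j_l} (respectively V_{j_l}, respectively W_{j_l}) for each l, and whose components at all other qubits and u(1)-component are zero, all lie in K_ψ. -/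
open scoped Matrix

noncomputable section

/-- The `n`-qubit Hilbert space `(ℂ²)^{⊗n}`, realized as functions `(Fin n → Fin 2) → ℂ`. -/
abbrev QState (n : ℕ) := (Fin n → Fin 2) → ℂ

/-- The ambient real vector space `ℝ × (Fin n → M₂(ℂ))` containing `u(1) ⊕ su(2)^n`. -/
abbrev GV (n : ℕ) := ℝ × (Fin n → Matrix (Fin 2) (Fin 2) ℂ)

/-- `su(2)`: traceless skew-Hermitian `2 × 2` complex matrices, as a real subspace. -/
def su2 : Submodule ℝ (Matrix (Fin 2) (Fin 2) ℂ) where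
  carrier := {X | Xᴴ = -X ∧ X.trace = 0}
  add_mem' := by
    rintro X Y ⟨hX1, hX2⟩ ⟨hY1, hY2⟩
    exact ⟨by rw [Matrix.conjTranspose_add, hX1, hY1, neg_add],
           by rw [Matrix.trace_add, hX2, hY2, add_zero]⟩
  zero_mem' := ⟨by simp, by simp⟩
  smul_mem' := by
    rintro r X ⟨hX1, hX2⟩
    exact ⟨by rw [Matrix.conjTranspose_smul, hX1, star_trivial, smul_neg],
           by rw [Matrix.trace_smul, hX2, smul_zero]⟩

/-- The Lie algebra `g = u(1) ⊕ su(2)^n` as a real subspace of `GV n`. -/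
def gSub (n : ℕ) : Submodule ℝ (GV n) :=
  (⊤ : Submodule ℝ ℝ).prod (Submodule.pi Set.univ fun _ => su2)

/-- `g_S`: elements `(0, X)` of `g` with `X j = 0` for `j ∉ S`. -/
def gS {n : ℕ} (S : Set (Fin n)) : Submodule ℝ (GV n) :=
  (⊥ : Submodule ℝ ℝ).prod (Submodule.pi Set.univ fun j =>
    letI := Classical.dec (j ∈ S)
    if j ∈ S then su2 else ⊥)

/-- `ḡ_S`: elements `(t, X)` of `g` with `X j = 0` for `j ∈ S`. -/
def gBar {n : ℕ} (S : Set (Fin n)) : Submodule ℝ (GV n) :=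
  (⊤ : Submodule ℝ ℝ).prod (Submodule.pi Set.univ fun j =>
    letI := Classical.dec (j ∈ S)
    if j ∈ S then (⊥ : Submodule ℝ (Matrix (Fin 2) (Fin 2) ℂ)) else su2)

/-- The projection `P_j : g → su(2)`, `(t, X) ↦ X j`. -/
def Pj {n : ℕ} (j : Fin n) : GV n →ₗ[ℝ] Matrix (Fin 2) (Fin 2) ℂ :=
  (LinearMap.proj j).comp (LinearMap.snd ℝ ℝ (Fin n → Matrix (Fin 2) (Fin 2) ℂ))

/-- Apply the matrix `X` to qubit `j` of the state `ψ`. -/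
def applySingle {n : ℕ} (j : Fin n) (X : Matrix (Fin 2) (Fin 2) ℂ) (ψ : QState n) : QState n :=
  fun I => ∑ k : Fin 2, X (I j) k * ψ (Function.update I j k)

/-- The infinitesimal local-unitary action: `dΦ_ψ(t, X) = i t ψ + Σ_j X_j ψ`. -/
def dPhi {n : ℕ} (ψ : QState n) : GV n →ₗ[ℝ] QState n where
  toFun x := fun I => Complex.I * (x.1 : ℂ) * ψ I + ∑ j, applySingle j (x.2 j) ψ I
  map_add' x y := by
    funext I
    simp only [applySingle, Prod.fst_add, Prod.snd_add, Pi.add_apply, Matrix.add_apply,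
      Complex.ofReal_add, add_mul, Finset.sum_add_distrib]
    ring
  map_smul' r x := by
    funext I
    simp only [applySingle, Prod.smul_fst, Prod.smul_snd, Pi.smul_apply, Matrix.smul_apply,
      smul_eq_mul, Complex.real_smul, Complex.ofReal_mul, RingHom.id_apply,
      Finset.mul_sum, mul_add]
    congr 1
    · ring
    · refine Finset.sum_congr rfl fun j _ => Finset.sum_congr rfl fun k _ => by ring

/-- The stabilizer subalgebra `K_ψ = {(t,X) ∈ g : dΦ_ψ(t,X) = 0}`. -/
def stab {n : ℕ} (ψ : QState n) : Submodule ℝ (GV n) :=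
  gSub n ⊓ LinearMap.ker (dPhi ψ)

/-- The componentwise bracket on `g` (zero in the `u(1)` component). -/
def gBracket {n : ℕ} (x y : GV n) : GV n :=
  (0, fun j => ⁅x.2 j, y.2 j⁆)

/-- An `su(2)` block for `ψ`: a set `S` of qubits with `dim (K_ψ ∩ g_S) > 1` and
`dim (K_ψ ∩ g_{S'}) = 0` for every proper subset `S' ⊊ S`. -/
def Su2Block {n : ℕ} (ψ : QState n) (S : Set (Fin n)) : Prop :=
  1 < Module.finrank ℝ ↥(stab ψ ⊓ gS S) ∧
  ∀ S' : Set (Fin n), S' ⊂ S → Module.finrank ℝ ↥(stab ψ ⊓ gS S') = 0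

/-- The union `B` of all `su(2)` blocks for `ψ`. -/
def blockUnion {n : ℕ} (ψ : QState n) : Set (Fin n) :=
  {q | ∃ S : Set (Fin n), Su2Block ψ S ∧ q ∈ S}

/-- The number `p` of `su(2)` blocks for `ψ`. -/
def blockCount {n : ℕ} (ψ : QState n) : ℕ :=
  {S : Set (Fin n) | Su2Block ψ S}.ncard

/-- `ψ` factors across the set `S` of qubits: `ψ(I) = φ(I|_S) · χ(I|_{Sᶜ})`. -/
def FactorsAcross {n : ℕ} (ψ : QState n) (S : Set (Fin n)) : Prop :=
  ∃ (φ : (↥S → Fin 2) → ℂ) (χ : (↥(Sᶜ) → Fin 2) → ℂ),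
    ∀ I : Fin n → Fin 2, ψ I = φ (fun j => I j.1) * χ (fun j => I j.1)

/-- `ψ` is a nonproduct state: it factors across no proper nonempty set of qubits. -/
def IsNonproduct {n : ℕ} (ψ : QState n) : Prop :=
  ∀ S : Set (Fin n), S ≠ ∅ → S ≠ Set.univ → ¬ FactorsAcross ψ S

/-- `ψ` has a single-qubit factor. -/
def HasSingleQubitFactor {n : ℕ} (ψ : QState n) : Prop :=
  ∃ j : Fin n, FactorsAcross ψ {j}

/-- Apply the local unitary (or just local linear) transformation `⊗_j U_j` to `ψ`. -/
def luApply {n : ℕ} (U : Fin n → Matrix (Fin 2) (Fin 2) ℂ) (ψ : QState n) : QState n :=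
  fun I => ∑ J : Fin n → Fin 2, (∏ j, U j (I j) (J j)) * ψ J

/-- Local unitary equivalence of `n`-qubit states. -/
def LUEquiv {n : ℕ} (ψ ψ' : QState n) : Prop :=
  ∃ U : Fin n → Matrix (Fin 2) (Fin 2) ℂ,
    (∀ j, U j ∈ Matrix.unitaryGroup (Fin 2) ℂ) ∧ ψ' = luApply U ψ

/-- The two-qubit singlet state `φ(a,b) = δ_{a0} δ_{b1} − δ_{a1} δ_{b0}`. -/
def singletFn : Fin 2 → Fin 2 → ℂ := fun a b =>
  if a = 0 ∧ b = 1 then 1 else if a = 1 ∧ b = 0 then -1 else 0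

/-- `ψ` has a singlet factor: it is LU-equivalent to a state that factors across a
two-element set of qubits, with the two-qubit factor being the singlet. -/
def HasSingletFactor {n : ℕ} (ψ : QState n) : Prop :=
  ∃ ψ' : QState n, LUEquiv ψ ψ' ∧ ∃ j k : Fin n, j ≠ k ∧
    ∃ χ : (↥(({j, k} : Set (Fin n))ᶜ) → Fin 2) → ℂ,
      ∀ I : Fin n → Fin 2, ψ' I = singletFn (I j) (I k) * χ (fun q => I q.1)

/-- The matrix `A = diag(i, −i) ∈ su(2)`. -/
def matA : Matrix (Fin 2) (Fin 2) ℂ := !![Complex.I, 0; 0, -Complex.I]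

/-- The generalized `n`-qubit GHZ state `α|0…0⟩ + β|1…1⟩`. -/
def ghz (n : ℕ) (α β : ℂ) : QState n := fun I =>
  if ∀ j, I j = 0 then α else if ∀ j, I j = 1 then β else 0


namespace Stmt0Aux

open Matrix

/- ### Cross product auxiliary lemmas -/

lemma bac_cab (u v : Fin 3 → ℝ) :
    u ⨯₃ (u ⨯₃ v) = (u ⬝ᵥ v) • u - (u ⬝ᵥ u) • v := by
  funext i
  fin_cases i <;>
    simp [crossProduct, dotProduct, Fin.sum_univ_three] <;> ring

lemma dot_self_pos {u : Fin 3 → ℝ} (hu : u ≠ 0) : 0 < u ⬝ᵥ u := by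
  have h1 : u ⬝ᵥ u ≠ 0 := fun h => hu (dotProduct_self_eq_zero.mp h)
  have h2 : 0 ≤ u ⬝ᵥ u := by
    simp only [dotProduct]
    exact Finset.sum_nonneg fun i _ => mul_self_nonneg _
  exact lt_of_le_of_ne h2 (Ne.symm h1)

/- ### su2 auxiliary lemmas -/

lemma su2_entries {X : Matrix (Fin 2) (Fin 2) ℂ} (hX : X ∈ su2) :
    (X 0 0).re = 0 ∧ X 1 1 = -X 0 0 ∧ X 1 0 = -(starRingEnd ℂ) (X 0 1) := by
  obtain ⟨h1, h2⟩ := hX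
  have e00 := congrFun (congrFun h1 0) 0
  have e01 := congrFun (congrFun h1 0) 1
  simp [Matrix.conjTranspose_apply] at e00 e01
  have tr : X 0 0 + X 1 1 = 0 := by
    simpa [Matrix.trace, Fin.sum_univ_two] using h2
  refine ⟨?_, by linear_combination tr, ?_⟩
  · have := congrArg Complex.re e00
    simp at this; linarith
  · have := congrArg (starRingEnd ℂ) e01
    simpa using this

lemma su2_bracket {X Y : Matrix (Fin 2) (Fin 2) ℂ} (hX : X ∈ su2) (hY : Y ∈ su2) :
    ⁅X, Y⁆ ∈ su2 := by
  obtain ⟨hx1, hx2⟩ := hX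
  obtain ⟨hy1, hy2⟩ := hY
  constructor
  · rw [Ring.lie_def, Matrix.conjTranspose_sub, Matrix.conjTranspose_mul,
      Matrix.conjTranspose_mul, hx1, hy1]
    simp only [Matrix.neg_mul, Matrix.mul_neg, neg_neg]
    rw [neg_sub]
  · rw [Ring.lie_def, Matrix.trace_sub, Matrix.trace_mul_comm]
    exact sub_self _

/-- Coordinates on `su(2)` (real-linear on all matrices). -/
def kap : Matrix (Fin 2) (Fin 2) ℂ →ₗ[ℝ] (Fin 3 → ℝ) where
  toFun X := ![-2 * (X 0 1).im, -2 * (X 0 1).re, -2 * (X 0 0).im]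
  map_add' X Y := by funext i; fin_cases i <;> simp <;> ring
  map_smul' r X := by funext i; fin_cases i <;> simp <;> ring

lemma kap_inj {X : Matrix (Fin 2) (Fin 2) ℂ} (hX : X ∈ su2) (h : kap X = 0) : X = 0 := by
  obtain ⟨h1, h2, h3⟩ := su2_entries hX
  have k0 := congrFun h 0
  have k1 := congrFun h 1
  have k2 := congrFun h 2
  simp [kap] at k0 k1 k2
  have e01 : X 0 1 = 0 := Complex.ext k1 k0
  have e00 : X 0 0 = 0 := Complex.ext h1 k2
  ext i j
  fin_cases i <;> fin_cases j <;> simp [e00, e01, h2, h3]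

lemma kap_bracket {X Y : Matrix (Fin 2) (Fin 2) ℂ} (hX : X ∈ su2) (hY : Y ∈ su2) :
    kap ⁅X, Y⁆ = (kap X) ⨯₃ (kap Y) := by
  obtain ⟨hx1, hx2, hx3⟩ := su2_entries hX
  obtain ⟨hy1, hy2, hy3⟩ := su2_entries hY
  funext i
  fin_cases i <;>
  · simp [kap, crossProduct, Ring.lie_def, Matrix.mul_apply, Fin.sum_univ_two,
      hx2, hx3, hy2, hy3, Complex.ext_iff]
    rw [hx1, hy1]; ring

variable {n : ℕ}

/- ### applySingle auxiliary lemmas -/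

lemma applySingle_comm {j k : Fin n} (hjk : j ≠ k) (X Y : Matrix (Fin 2) (Fin 2) ℂ)
    (ψ : QState n) :
    applySingle j X (applySingle k Y ψ) = applySingle k Y (applySingle j X ψ) := by
  funext I
  simp only [applySingle, Finset.mul_sum]
  rw [Finset.sum_comm]
  refine Finset.sum_congr rfl fun b _ => Finset.sum_congr rfl fun a _ => ?_
  rw [Function.update_of_ne hjk.symm, Function.update_of_ne hjk, Function.update_comm hjk]
  ring

lemma applySingle_mul (j : Fin n) (X Y : Matrix (Fin 2) (Fin 2) ℂ) (ψ : QState n) :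
    applySingle j X (applySingle j Y ψ) = applySingle j (X * Y) ψ := by
  funext I
  simp only [applySingle, Finset.mul_sum, Matrix.mul_apply, Finset.sum_mul]
  rw [Finset.sum_comm]
  refine Finset.sum_congr rfl fun b _ => Finset.sum_congr rfl fun a _ => ?_
  rw [Function.update_self, Function.update_idem]
  ring

lemma applySingle_sub (j : Fin n) (X Y : Matrix (Fin 2) (Fin 2) ℂ) (ψ : QState n) (I) :
    applySingle j (X - Y) ψ I = applySingle j X ψ I - applySingle j Y ψ I := by
  simp [applySingle, sub_mul, Finset.sum_sub_distrib]

lemma applySingle_sumState (j : Fin n) (X : Matrix (Fin 2) (Fin 2) ℂ)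
    (φ : Fin n → QState n) :
    applySingle j X (fun I' => ∑ k, φ k I') = fun I => ∑ k, applySingle j X (φ k) I := by
  funext I
  simp only [applySingle, Finset.mul_sum]
  exact Finset.sum_comm

lemma applySingle_smulState (j : Fin n) (X : Matrix (Fin 2) (Fin 2) ℂ) (c : ℂ)
    (ψ : QState n) :
    applySingle j X (fun I' => c * ψ I') = fun I => c * applySingle j X ψ I := by
  funext I
  simp only [applySingle, Finset.mul_sum]
  exact Finset.sum_congr rfl fun a _ => by ring

lemma dPhi_apply (ψ : QState n) (x : GV n) (I : Fin n → Fin 2) :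
    dPhi ψ x I = Complex.I * (x.1 : ℂ) * ψ I + ∑ j, applySingle j (x.2 j) ψ I := rfl

lemma dPhi_bracket_zero (ψ : QState n) {x y : GV n}
    (hx : dPhi ψ x = 0) (hy : dPhi ψ y = 0) : dPhi ψ (gBracket x y) = 0 := by
  have hx' : ∀ I, (∑ j, applySingle j (x.2 j) ψ I) = -(Complex.I * (x.1 : ℂ) * ψ I) := by
    intro I
    have h := congrFun hx I
    rw [dPhi_apply] at h
    simpa [eq_neg_iff_add_eq_zero, add_comm] using h
  have hy' : ∀ I, (∑ j, applySingle j (y.2 j) ψ I) = -(Complex.I * (y.1 : ℂ) * ψ I) := by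
    intro I
    have h := congrFun hy I
    rw [dPhi_apply] at h
    simpa [eq_neg_iff_add_eq_zero, add_comm] using h
  have hdouble : ∀ (u v : GV n),
      (∀ I, (∑ j, applySingle j (v.2 j) ψ I) = -(Complex.I * (v.1 : ℂ) * ψ I)) →
      (∀ I, (∑ j, applySingle j (u.2 j) ψ I) = -(Complex.I * (u.1 : ℂ) * ψ I)) →
      ∀ I, (∑ j, ∑ k, applySingle j (u.2 j) (applySingle k (v.2 k) ψ) I)
        = -(Complex.I * (v.1 : ℂ)) * -(Complex.I * (u.1 : ℂ)) * ψ I := by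
    intro u v hv hu I
    have step1 : ∀ j, (∑ k, applySingle j (u.2 j) (applySingle k (v.2 k) ψ) I)
        = applySingle j (u.2 j) (fun I' => ∑ k, applySingle k (v.2 k) ψ I') I := by
      intro j
      rw [applySingle_sumState]
    have step2 : (fun I' => ∑ k, applySingle k (v.2 k) ψ I')
        = fun I' => -(Complex.I * (v.1 : ℂ)) * ψ I' := by
      funext I'
      rw [hv I']; ring
    calc (∑ j, ∑ k, applySingle j (u.2 j) (applySingle k (v.2 k) ψ) I)
        = ∑ j, applySingle j (u.2 j) (fun I' => -(Complex.I * (v.1 : ℂ)) * ψ I') I := by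
          refine Finset.sum_congr rfl fun j _ => ?_
          rw [step1 j, step2]
      _ = ∑ j, -(Complex.I * (v.1 : ℂ)) * applySingle j (u.2 j) ψ I := by
          refine Finset.sum_congr rfl fun j _ => ?_
          rw [applySingle_smulState]
      _ = -(Complex.I * (v.1 : ℂ)) * ∑ j, applySingle j (u.2 j) ψ I := by
          rw [Finset.mul_sum]
      _ = -(Complex.I * (v.1 : ℂ)) * -(Complex.I * (u.1 : ℂ)) * ψ I := by
          rw [hu I]; ring
  funext I
  rw [dPhi_apply]
  have key : (∑ j, applySingle j ((gBracket x y).2 j) ψ I) = 0 := by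
    have diag : ∀ j, applySingle j ((gBracket x y).2 j) ψ I
        = ∑ k, (applySingle j (x.2 j) (applySingle k (y.2 k) ψ) I
            - applySingle k (y.2 k) (applySingle j (x.2 j) ψ) I) := by
      intro j
      rw [Finset.sum_eq_single j]
      · show applySingle j ⁅x.2 j, y.2 j⁆ ψ I = _
        rw [Ring.lie_def, applySingle_sub, ← applySingle_mul, ← applySingle_mul]
      · intro k _ hkj
        rw [applySingle_comm (Ne.symm hkj) (x.2 j) (y.2 k) ψ]
        exact sub_self _
      · intro h; exact absurd (Finset.mem_univ j) h
    calc (∑ j, applySingle j ((gBracket x y).2 j) ψ I)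
        = ∑ j, ∑ k, (applySingle j (x.2 j) (applySingle k (y.2 k) ψ) I
            - applySingle k (y.2 k) (applySingle j (x.2 j) ψ) I) := by
          exact Finset.sum_congr rfl fun j _ => diag j
      _ = (∑ j, ∑ k, applySingle j (x.2 j) (applySingle k (y.2 k) ψ) I)
          - ∑ j, ∑ k, applySingle k (y.2 k) (applySingle j (x.2 j) ψ) I := by
          simp [Finset.sum_sub_distrib]
      _ = (∑ j, ∑ k, applySingle j (x.2 j) (applySingle k (y.2 k) ψ) I)
          - ∑ k, ∑ j, applySingle k (y.2 k) (applySingle j (x.2 j) ψ) I := by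
          congr 1
          exact Finset.sum_comm
      _ = 0 := by
          rw [hdouble x y hy' hx' I, hdouble y x hx' hy' I]
          ring
  rw [key]
  show Complex.I * ((0 : ℝ) : ℂ) * ψ I + 0 = 0
  simp

/- ### Membership lemmas -/

lemma mem_gS {S : Set (Fin n)} {x : GV n} (hx : x ∈ gS S) :
    x.1 = 0 ∧ (∀ j ∈ S, x.2 j ∈ su2) ∧ ∀ j ∉ S, x.2 j = 0 := by
  obtain ⟨h1, h2⟩ := (Submodule.mem_prod).1 hx
  refine ⟨(Submodule.mem_bot ℝ).1 h1, ?_, ?_⟩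
  · intro j hj
    have := (Submodule.mem_pi).1 h2 j (Set.mem_univ j)
    rwa [if_pos hj] at this
  · intro j hj
    have := (Submodule.mem_pi).1 h2 j (Set.mem_univ j)
    rw [if_neg hj] at this
    exact (Submodule.mem_bot ℝ).1 this

lemma gS_mem {S : Set (Fin n)} {x : GV n} (h1 : x.1 = 0)
    (h2 : ∀ j ∈ S, x.2 j ∈ su2) (h3 : ∀ j ∉ S, x.2 j = 0) : x ∈ gS S := by
  refine Submodule.mem_prod.2 ⟨(Submodule.mem_bot ℝ).2 h1,
    Submodule.mem_pi.2 fun j _ => ?_⟩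
  by_cases hj : j ∈ S
  · rw [if_pos hj]; exact h2 j hj
  · rw [if_neg hj]; exact (Submodule.mem_bot ℝ).2 (h3 j hj)

lemma stab_bracket {ψ : QState n} {x y : GV n}
    (hx : x ∈ stab ψ) (hy : y ∈ stab ψ) : gBracket x y ∈ stab ψ := by
  obtain ⟨hx1, hx2⟩ := Submodule.mem_inf.1 hx
  obtain ⟨hy1, hy2⟩ := Submodule.mem_inf.1 hy
  refine Submodule.mem_inf.2 ⟨?_, LinearMap.mem_ker.2
    (dPhi_bracket_zero ψ (LinearMap.mem_ker.1 hx2) (LinearMap.mem_ker.1 hy2))⟩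
  refine Submodule.mem_prod.2 ⟨trivial, Submodule.mem_pi.2 fun j _ => ?_⟩
  exact su2_bracket
    ((Submodule.mem_pi.1 (Submodule.mem_prod.1 hx1).2) j (Set.mem_univ j))
    ((Submodule.mem_pi.1 (Submodule.mem_prod.1 hy1).2) j (Set.mem_univ j))

lemma K_bracket {ψ : QState n} {S : Set (Fin n)} {x y : GV n}
    (hx : x ∈ stab ψ ⊓ gS S) (hy : y ∈ stab ψ ⊓ gS S) :
    gBracket x y ∈ stab ψ ⊓ gS S := by
  obtain ⟨hx1, hx2⟩ := Submodule.mem_inf.1 hx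
  obtain ⟨hy1, hy2⟩ := Submodule.mem_inf.1 hy
  refine Submodule.mem_inf.2 ⟨stab_bracket hx1 hy1, gS_mem rfl ?_ ?_⟩
  · intro j hj
    exact su2_bracket ((mem_gS hx2).2.1 j hj) ((mem_gS hy2).2.1 j hj)
  · intro j hj
    show ⁅x.2 j, y.2 j⁆ = 0
    rw [(mem_gS hx2).2.2 j hj, Ring.lie_def, Matrix.zero_mul, Matrix.mul_zero, sub_zero]

lemma stab_proj_inj {ψ : QState n} {S : Set (Fin n)} (hS : Su2Block ψ S) {j0 : Fin n}
    (hj0 : j0 ∈ S) {x : GV n} (hx : x ∈ stab ψ ⊓ gS S) (h0 : x.2 j0 = 0) : x = 0 := by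
  have hfr := hS.2 (S \ {j0}) (Set.sdiff_singleton_ssubset.2 hj0)
  have hx' : x ∈ stab ψ ⊓ gS (S \ {j0}) := by
    obtain ⟨h1, h2⟩ := Submodule.mem_inf.1 hx
    obtain ⟨e1, e2, e3⟩ := mem_gS h2
    refine Submodule.mem_inf.2 ⟨h1, gS_mem e1 (fun j hj => e2 j hj.1) ?_⟩
    intro j hj
    by_cases hjS : j ∈ S
    · have hjj : j = j0 := by
        by_contra hne
        exact hj ⟨hjS, by simpa using hne⟩
      rw [hjj]; exact h0
    · exact e3 j hjS
  have hbot : stab ψ ⊓ gS (S \ {j0}) = ⊥ := Submodule.finrank_eq_zero.1 hfr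
  rw [hbot] at hx'
  exact hx'

end Stmt0Aux

open Stmt0Aux in
set_option maxHeartbeats 2000000 in
/-- If `S` is an `su(2)` block for `ψ`, then there exist `su(2)`-valued
families `U, V, W`, supported on `S`, satisfying the `su(2)` bracket relations at each
qubit of `S`, such that `(0, U)`, `(0, V)`, `(0, W)` all lie in `K_ψ`. -/
theorem stmt0 {n : ℕ} (hn : 1 ≤ n) (ψ : QState n) (hψ : ψ ≠ 0)
    (S : Set (Fin n)) (hS : Su2Block ψ S) :
    ∃ U V W : Fin n → Matrix (Fin 2) (Fin 2) ℂ,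
      (∀ j ∉ S, U j = 0 ∧ V j = 0 ∧ W j = 0) ∧
      (∀ j ∈ S, U j ∈ su2 ∧ V j ∈ su2 ∧ W j ∈ su2 ∧
        ⁅U j, V j⁆ = W j ∧ ⁅V j, W j⁆ = U j ∧ ⁅W j, U j⁆ = V j) ∧
      ((0 : ℝ), U) ∈ stab ψ ∧ ((0 : ℝ), V) ∈ stab ψ ∧ ((0 : ℝ), W) ∈ stab ψ := by
  classical
  set K := stab ψ ⊓ gS S with hK
  have hd : 1 < Module.finrank ℝ ↥K := hS.1
  -- S is nonempty
  obtain ⟨j0, hj0⟩ : ∃ j0, j0 ∈ S := by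
    by_contra h
    push_neg at h
    have hbot : K ≤ ⊥ := by
      intro x hx
      obtain ⟨e1, e2, e3⟩ := mem_gS (Submodule.mem_inf.1 hx).2
      have hx0 : x = 0 := Prod.ext e1 (funext fun j => e3 j (h j))
      simpa [hx0] using Submodule.zero_mem (⊥ : Submodule ℝ (GV n))
    have h0 : Module.finrank ℝ ↥K = 0 := by
      rw [le_bot_iff.1 hbot]
      exact Submodule.finrank_eq_zero.2 rfl
    omega
  -- the coordinate projection at qubit j0
  set Lm : GV n →ₗ[ℝ] (Fin 3 → ℝ) := Stmt0Aux.kap ∘ₗ Pj j0 with hLm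
  have hLmapply : ∀ x : GV n, Lm x = Stmt0Aux.kap (x.2 j0) := fun x => rfl
  have hsu2 : ∀ x ∈ K, x.2 j0 ∈ su2 := fun x hx =>
    (mem_gS (Submodule.mem_inf.1 hx).2).2.1 j0 hj0
  have hLminj : ∀ x ∈ K, Lm x = 0 → x = 0 := by
    intro x hx h0
    exact stab_proj_inj hS hj0 hx (kap_inj (hsu2 x hx) h0)
  -- two independent elements of K
  set B := Module.finBasis ℝ ↥K with hB
  set i0 : Fin (Module.finrank ℝ ↥K) := ⟨0, by omega⟩ with hi0
  set i1 : Fin (Module.finrank ℝ ↥K) := ⟨1, by omega⟩ with hi1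
  set xa : GV n := (B i0 : GV n) with hxa
  set xb : GV n := (B i1 : GV n) with hxb
  have hxaK : xa ∈ K := (B i0).2
  have hxbK : xb ∈ K := (B i1).2
  have hne : i0 ≠ i1 := by
    intro h
    have hv := congrArg Fin.val h
    simp [hi0, hi1] at hv
  have pairK : ∀ s t : ℝ, s • xa + t • xb = 0 → s = 0 ∧ t = 0 := by
    intro s t hst
    have hsum : s • B i0 + t • B i1 = (0 : ↥K) := by
      refine Subtype.ext ?_
      simp only [Submodule.coe_add, Submodule.coe_smul, ZeroMemClass.coe_zero, ← hxa, ← hxb]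
      exact hst
    have h0 := congrArg (fun v => B.repr v i0) hsum
    have h1 := congrArg (fun v => B.repr v i1) hsum
    simp [Module.Basis.repr_self, Finsupp.single_apply, hne, Ne.symm hne] at h0 h1
    exact ⟨h0, h1⟩
  set a := Lm xa with ha
  set b := Lm xb with hbdef
  have hpair : ∀ s t : ℝ, s • a + t • b = 0 → s = 0 ∧ t = 0 := by
    intro s t hst
    have hmem : s • xa + t • xb ∈ K := K.add_mem (K.smul_mem _ hxaK) (K.smul_mem _ hxbK)
    have h0 : Lm (s • xa + t • xb) = 0 := by
      rw [map_add, map_smul, map_smul]; exact hst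
    exact pairK s t (hLminj _ hmem h0)
  have ha0 : a ≠ 0 := by
    intro h
    have := (hpair 1 0 (by simp [h])).1
    norm_num at this
  set c := a ⨯₃ b with hc
  have hLmBr : ∀ u v : GV n, u ∈ K → v ∈ K → Lm (gBracket u v) = (Lm u) ⨯₃ (Lm v) := by
    intro u v hu hv
    rw [hLmapply, hLmapply, hLmapply]
    exact kap_bracket (hsu2 u hu) (hsu2 v hv)
  have hc0 : c ≠ 0 := by
    intro h
    have hb := bac_cab a b
    rw [← hc, h, map_zero] at hb
    have hcomb : (a ⬝ᵥ b) • a + (-(a ⬝ᵥ a)) • b = 0 := by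
      rw [neg_smul, ← sub_eq_add_neg, ← hb]
    have hz := (hpair _ _ hcomb).2
    have haa : a ⬝ᵥ a = 0 := by linarith [neg_eq_zero.1 hz]
    exact ha0 (dotProduct_self_eq_zero.1 haa)
  set V := Submodule.map Lm K with hV
  have haV : a ∈ V := ⟨xa, hxaK, rfl⟩
  have hbV : b ∈ V := ⟨xb, hxbK, rfl⟩
  have hcV : c ∈ V := ⟨gBracket xa xb, K_bracket hxaK hxbK, by
    rw [hLmBr xa xb hxaK hxbK]⟩
  have htriple : LinearIndependent ℝ ![a, b, c] := by
    rw [Fintype.linearIndependent_iff]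
    intro g hg
    have hg' : g 0 • a + g 1 • b + g 2 • c = 0 := by
      simpa [Fin.sum_univ_three] using hg
    have h2 : g 2 = 0 := by
      have hdot := congrArg (fun v => v ⬝ᵥ c) hg'
      simp only [add_dotProduct, smul_dotProduct, smul_eq_mul,
        zero_dotProduct, hc, dot_self_cross, dot_cross_self,
        mul_zero, zero_add, add_zero] at hdot
      rcases mul_eq_zero.1 hdot with h | h
      · exact h
      · exact absurd h (ne_of_gt (dot_self_pos hc0))
    have h01 := hpair (g 0) (g 1) (by rwa [h2, zero_smul, add_zero] at hg')
    intro i; fin_cases i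
    · exact h01.1
    · exact h01.2
    · exact h2
  have hVtop : V = ⊤ := by
    have hle : Submodule.span ℝ (Set.range ![a, b, c]) ≤ V := by
      rw [Submodule.span_le]
      rintro v ⟨i, rfl⟩
      fin_cases i
      · exact haV
      · exact hbV
      · exact hcV
    have h3 : Module.finrank ℝ ↥(Submodule.span ℝ (Set.range ![a, b, c])) = 3 := by
      rw [finrank_span_eq_card htriple]; simp
    have hge : 3 ≤ Module.finrank ℝ ↥V := by
      calc 3 = Module.finrank ℝ ↥(Submodule.span ℝ (Set.range ![a, b, c])) := h3.symm
        _ ≤ Module.finrank ℝ ↥V := Submodule.finrank_mono hle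
    have hle3 : Module.finrank ℝ ↥V ≤ 3 := by
      have := Submodule.finrank_le V
      rwa [Module.finrank_fin_fun] at this
    apply Submodule.eq_top_of_finrank_eq
    rw [Module.finrank_fin_fun]
    omega
  have hmemV : ∀ v : Fin 3 → ℝ, ∃ x ∈ K, Lm x = v := by
    intro v
    have : v ∈ V := hVtop ▸ Submodule.mem_top
    obtain ⟨x, hx1, hx2⟩ := this
    exact ⟨x, hx1, hx2⟩
  obtain ⟨x1, hx1K, hx1L⟩ := hmemV ![1, 0, 0]
  obtain ⟨x2, hx2K, hx2L⟩ := hmemV ![0, 1, 0]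
  obtain ⟨x3, hx3K, hx3L⟩ := hmemV ![0, 0, 1]
  have cross12 : (![1, 0, 0] : Fin 3 → ℝ) ⨯₃ ![0, 1, 0] = ![0, 0, 1] := by
    funext i; fin_cases i <;> simp [crossProduct]
  have cross23 : (![0, 1, 0] : Fin 3 → ℝ) ⨯₃ ![0, 0, 1] = ![1, 0, 0] := by
    funext i; fin_cases i <;> simp [crossProduct]
  have cross31 : (![0, 0, 1] : Fin 3 → ℝ) ⨯₃ ![1, 0, 0] = ![0, 1, 0] := by
    funext i; fin_cases i <;> simp [crossProduct]
  have hbr : ∀ u v w : GV n, u ∈ K → v ∈ K → w ∈ K →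
      (Lm u) ⨯₃ (Lm v) = Lm w → gBracket u v = w := by
    intro u v w hu hv hw hcr
    have h1 : gBracket u v - w ∈ K := K.sub_mem (K_bracket hu hv) hw
    have h2 : Lm (gBracket u v - w) = 0 := by
      rw [map_sub, hLmBr u v hu hv, hcr, sub_self]
    exact sub_eq_zero.1 (hLminj _ h1 h2)
  have h12 : gBracket x1 x2 = x3 := hbr x1 x2 x3 hx1K hx2K hx3K
    (by rw [hx1L, hx2L, hx3L, cross12])
  have h23 : gBracket x2 x3 = x1 := hbr x2 x3 x1 hx2K hx3K hx1K
    (by rw [hx1L, hx2L, hx3L, cross23])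
  have h31 : gBracket x3 x1 = x2 := hbr x3 x1 x2 hx3K hx1K hx2K
    (by rw [hx1L, hx2L, hx3L, cross31])
  have hcomp : ∀ (u v w : GV n), gBracket u v = w → ∀ j, ⁅u.2 j, v.2 j⁆ = w.2 j := by
    intro u v w h j
    exact congrArg (fun z => z.2 j) h
  have hmemS := fun (x : GV n) (hx : x ∈ K) => mem_gS (Submodule.mem_inf.1 hx).2
  have hstab : ∀ x : GV n, x ∈ K → ((0 : ℝ), x.2) ∈ stab ψ := by
    intro x hx
    have h0 : x = ((0 : ℝ), x.2) := Prod.ext (hmemS x hx).1 rfl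
    exact h0 ▸ (Submodule.mem_inf.1 hx).1
  refine ⟨x1.2, x2.2, x3.2, ?_, ?_, hstab x1 hx1K, hstab x2 hx2K, hstab x3 hx3K⟩
  · intro j hj
    exact ⟨(hmemS x1 hx1K).2.2 j hj, (hmemS x2 hx2K).2.2 j hj, (hmemS x3 hx3K).2.2 j hj⟩
  · intro j hj
    exact ⟨(hmemS x1 hx1K).2.1 j hj, (hmemS x2 hx2K).2.1 j hj, (hmemS x3 hx3K).2.1 j hj,
      hcomp _ _ _ h12 j, hcomp _ _ _ h23 j, hcomp _ _ _ h31 j⟩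
end
end

section
/- Let S be an su(2) block for ψ. Then dim_ℝ(K_ψ ∩ g_S) = 3, and K_ψ ∩ g_S is a real Lie subalgebra of g isomorphic as a real Lie algebra to su(2). -/
open scoped Matrix

noncomputable section

section Aux

open Matrix

/-- Coordinates for `su2`. -/
def toSu2 : (Fin 3 → ℝ) →ₗ[ℝ] Matrix (Fin 2) (Fin 2) ℂ where
  toFun c := !![(c 2 : ℂ) * Complex.I, (c 0 : ℂ) * Complex.I + (c 1 : ℂ);
                (c 0 : ℂ) * Complex.I - (c 1 : ℂ), -((c 2 : ℂ) * Complex.I)]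
  map_add' x y := by
    ext i j
    fin_cases i <;> fin_cases j <;> simp <;> ring
  map_smul' r x := by
    ext i j
    fin_cases i <;> fin_cases j <;> simp [Matrix.smul_apply] <;> ring

lemma toSu2_bracket (u v : Fin 3 → ℝ) :
    ⁅toSu2 u, toSu2 v⁆ = toSu2 ((-2 : ℝ) • (crossProduct u v)) := by
  ext i j
  fin_cases i <;> fin_cases j <;>
    · simp [toSu2, Ring.lie_def, Matrix.mul_apply, crossProduct, Fin.sum_univ_two,
        Complex.ext_iff]
      constructor <;> ring

lemma toSu2_mem (c : Fin 3 → ℝ) : toSu2 c ∈ su2 := by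
  constructor
  · ext i j
    fin_cases i <;> fin_cases j <;>
      simp [toSu2, Matrix.conjTranspose_apply, Complex.ext_iff]
  · simp [toSu2, Matrix.trace_fin_two]

lemma toSu2_inj : Function.Injective toSu2 := by
  rw [injective_iff_map_eq_zero]
  intro c h
  have h00 := congrFun (congrFun (congrArg (fun M => (M : Matrix (Fin 2) (Fin 2) ℂ)) h) 0) 0
  have h01 := congrFun (congrFun (congrArg (fun M => (M : Matrix (Fin 2) (Fin 2) ℂ)) h) 0) 1
  simp [toSu2, Complex.ext_iff] at h00 h01
  funext i
  fin_cases i <;> simp [h00, h01.1, h01.2]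

lemma toSu2_surj {X : Matrix (Fin 2) (Fin 2) ℂ} (hX : X ∈ su2) :
    ∃ c : Fin 3 → ℝ, toSu2 c = X := by
  obtain ⟨h1, h2⟩ := hX
  refine ⟨![(X 0 1).im, (X 0 1).re, (X 0 0).im], ?_⟩
  have e00 := congrFun (congrFun h1 0) 0
  have e10 := congrFun (congrFun h1 0) 1
  rw [Matrix.trace_fin_two] at h2
  simp [Matrix.conjTranspose_apply, Complex.ext_iff] at e00 e10
  have h2' : X 1 1 = - X 0 0 := by linear_combination h2
  have h2'' : (X 1 1).re = -(X 0 0).re ∧ (X 1 1).im = -(X 0 0).im := by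
    rw [h2']; simp
  ext i j
  fin_cases i <;> fin_cases j <;>
      simp [toSu2, Complex.ext_iff] <;>
    first
      | (constructor <;> linarith [e00, e10.1, e10.2, h2''.1, h2''.2])
      | linarith [e00, e10.1, e10.2, h2''.1, h2''.2]

lemma su2_eq_range : su2 = LinearMap.range toSu2 := by
  ext X
  constructor
  · intro hX; obtain ⟨c, hc⟩ := toSu2_surj hX; exact ⟨c, hc⟩
  · rintro ⟨c, rfl⟩; exact toSu2_mem c

lemma finrank_su2 : Module.finrank ℝ ↥su2 = 3 := by
  rw [su2_eq_range, LinearMap.finrank_range_of_inj toSu2_inj]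
  simp

lemma su2_bracket_mem {X Y : Matrix (Fin 2) (Fin 2) ℂ} (hX : X ∈ su2) (hY : Y ∈ su2) :
    ⁅X, Y⁆ ∈ su2 := by
  obtain ⟨hX1, hX2⟩ := hX
  obtain ⟨hY1, hY2⟩ := hY
  constructor
  · rw [Ring.lie_def, Matrix.conjTranspose_sub, Matrix.conjTranspose_mul,
      Matrix.conjTranspose_mul, hX1, hY1]
    noncomm_ring
  · rw [Ring.lie_def, Matrix.trace_sub, Matrix.trace_mul_comm, sub_self]

lemma applySingle_zero_state {n : ℕ} (j : Fin n) (A : Matrix (Fin 2) (Fin 2) ℂ) :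
    applySingle j A (0 : QState n) = 0 := by
  funext I; simp [applySingle]

lemma applySingle_same {n : ℕ} (j : Fin n) (A B : Matrix (Fin 2) (Fin 2) ℂ) (ψ : QState n) :
    applySingle j A (applySingle j B ψ) = applySingle j (A * B) ψ := by
  funext I
  simp only [applySingle, Matrix.mul_apply, Finset.sum_mul, Finset.mul_sum,
    Function.update_self, Function.update_idem]
  rw [Finset.sum_comm]
  refine Finset.sum_congr rfl fun m _ => Finset.sum_congr rfl fun k _ => by ring

lemma applySingle_comm {n : ℕ} {j k : Fin n} (hjk : j ≠ k) (A B : Matrix (Fin 2) (Fin 2) ℂ)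
    (ψ : QState n) :
    applySingle j A (applySingle k B ψ) = applySingle k B (applySingle j A ψ) := by
  funext I
  simp only [applySingle, Finset.mul_sum]
  rw [Finset.sum_comm]
  refine Finset.sum_congr rfl fun b _ => Finset.sum_congr rfl fun a _ => ?_
  rw [Function.update_of_ne hjk.symm, Function.update_of_ne hjk,
    Function.update_comm hjk]
  ring

lemma applySingle_sum {n : ℕ} (j : Fin n) (A : Matrix (Fin 2) (Fin 2) ℂ) {ι : Type*}
    (s : Finset ι) (f : ι → QState n) :
    applySingle j A (fun I => ∑ k ∈ s, f k I) = fun I => ∑ k ∈ s, applySingle j A (f k) I := by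
  funext I
  simp only [applySingle, Finset.mul_sum]
  exact Finset.sum_comm

lemma sub_mat_apply {n : ℕ} (j : Fin n) (A B : Matrix (Fin 2) (Fin 2) ℂ) (ψ : QState n) (I) :
    applySingle j (A - B) ψ I = applySingle j A ψ I - applySingle j B ψ I := by
  simp [applySingle, Matrix.sub_apply, sub_mul, Finset.sum_sub_distrib]

lemma bracket_kernel {n : ℕ} (ψ : QState n) (X Y : Fin n → Matrix (Fin 2) (Fin 2) ℂ)
    (hX : (fun I => ∑ j, applySingle j (X j) ψ I) = 0)
    (hY : (fun I => ∑ j, applySingle j (Y j) ψ I) = 0) :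
    (fun I => ∑ j, applySingle j (X j * Y j - Y j * X j) ψ I) = 0 := by
  have key : ∀ (U V : Fin n → Matrix (Fin 2) (Fin 2) ℂ),
      (fun I => ∑ j, applySingle j (V j) ψ I) = 0 →
      ∀ I, ∑ j, ∑ k, applySingle j (U j) (applySingle k (V k) ψ) I = 0 := by
    intro U V hV I
    have h0 : ∀ j : Fin n, applySingle j (U j) (fun I' => ∑ k, applySingle k (V k) ψ I') = 0 := by
      intro j; rw [hV]; exact applySingle_zero_state j (U j)
    have h2 : ∀ j : Fin n, ∑ k, applySingle j (U j) (applySingle k (V k) ψ) I = 0 := by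
      intro j
      have := congrFun (h0 j) I
      rwa [applySingle_sum] at this
    simp [h2]
  have hXY := key X Y hY
  have hYX := key Y X hX
  funext I
  simp only [Pi.zero_apply]
  have expand : ∀ j, applySingle j (X j * Y j - Y j * X j) ψ I
      = applySingle j (X j) (applySingle j (Y j) ψ) I
        - applySingle j (Y j) (applySingle j (X j) ψ) I := by
    intro j
    rw [sub_mat_apply, applySingle_same, applySingle_same]
  have swap_sum : ∀ F : Fin n → Fin n → ℂ,
      ∑ j, ∑ k ∈ Finset.univ \ {j}, F j k = ∑ j, ∑ k ∈ Finset.univ \ {j}, F k j :=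
    fun F => Finset.sum_comm' (s := Finset.univ) (t := fun j => Finset.univ \ {j})
      (t' := Finset.univ) (s' := fun k => Finset.univ \ {k})
      (fun x y => by simp [ne_comm, eq_comm])
  have offdiag : ∑ j, ∑ k ∈ Finset.univ \ {j}, applySingle j (X j) (applySingle k (Y k) ψ) I
      = ∑ j, ∑ k ∈ Finset.univ \ {j}, applySingle j (Y j) (applySingle k (X k) ψ) I := by
    rw [swap_sum]
    refine Finset.sum_congr rfl fun j _ => Finset.sum_congr rfl fun k hk => ?_
    rw [Finset.mem_sdiff, Finset.mem_singleton] at hk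
    rw [applySingle_comm (fun h => hk.2 h.symm)]
  have split : ∀ (f : Fin n → Fin n → ℂ),
      ∑ j, ∑ k, f j k = ∑ j, f j j + ∑ j, ∑ k ∈ Finset.univ \ {j}, f j k := by
    intro f
    rw [← Finset.sum_add_distrib]
    exact Finset.sum_congr rfl fun j _ =>
      Finset.sum_eq_add_sum_sdiff_singleton_of_mem (Finset.mem_univ j) _
  have e1 := split (fun j k => applySingle j (X j) (applySingle k (Y k) ψ) I)
  have e2 := split (fun j k => applySingle j (Y j) (applySingle k (X k) ψ) I)
  rw [hXY I] at e1
  rw [hYX I] at e2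
  simp_rw [expand]
  rw [Finset.sum_sub_distrib]
  linear_combination -e1 + e2 - offdiag

end Aux


section Aux2

lemma mem_gS_iff {n : ℕ} {S : Set (Fin n)} {x : GV n} :
    x ∈ gS S ↔ x.1 = 0 ∧ (∀ j ∈ S, x.2 j ∈ su2) ∧ (∀ j ∉ S, x.2 j = 0) := by
  simp only [gS, Submodule.mem_prod, Submodule.mem_pi, Set.mem_univ, forall_true_left,
    Submodule.mem_bot]
  constructor
  · rintro ⟨h1, h2⟩
    refine ⟨h1, fun j hj => ?_, fun j hj => ?_⟩
    · have := h2 j; rwa [if_pos hj] at this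
    · have := h2 j; rwa [if_neg hj, Submodule.mem_bot] at this
  · rintro ⟨h1, h2, h3⟩
    refine ⟨h1, fun j => ?_⟩
    by_cases hj : j ∈ S
    · rw [if_pos hj]; exact h2 j hj
    · rw [if_neg hj]; exact (Submodule.mem_bot ℝ).mpr (h3 j hj)

lemma mem_gSub_iff {n : ℕ} {x : GV n} : x ∈ gSub n ↔ ∀ j, x.2 j ∈ su2 := by
  simp [gSub, Submodule.mem_prod, Submodule.mem_pi]

lemma stab_gS_sum_zero {n : ℕ} {ψ : QState n} {S : Set (Fin n)} {x : GV n}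
    (hx : x ∈ stab ψ ⊓ gS S) :
    (fun I => ∑ j, applySingle j (x.2 j) ψ I) = 0 := by
  have h1 : x.1 = 0 := (mem_gS_iff.mp hx.2).1
  have h2 : dPhi ψ x = 0 := LinearMap.mem_ker.mp hx.1.2
  funext I
  have h3 := congrFun h2 I
  simp only [dPhi, LinearMap.coe_mk, AddHom.coe_mk, h1, Complex.ofReal_zero, mul_zero,
    zero_mul, zero_add, Pi.zero_apply] at h3 ⊢
  exact h3

lemma bracket_closed {n : ℕ} (ψ : QState n) (S : Set (Fin n)) :
    ∀ x y : GV n, x ∈ stab ψ ⊓ gS S → y ∈ stab ψ ⊓ gS S →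
      gBracket x y ∈ stab ψ ⊓ gS S := by
  intro x y hx hy
  have hxg := mem_gSub_iff.mp hx.1.1
  have hyg := mem_gSub_iff.mp hy.1.1
  have hxS := mem_gS_iff.mp hx.2
  have hyS := mem_gS_iff.mp hy.2
  have hker : dPhi ψ (gBracket x y) = 0 := by
    have hk := bracket_kernel ψ x.2 y.2 (stab_gS_sum_zero hx) (stab_gS_sum_zero hy)
    funext I
    have := congrFun hk I
    simp only [dPhi, LinearMap.coe_mk, AddHom.coe_mk, gBracket, Complex.ofReal_zero, mul_zero,
      zero_mul, zero_add, Pi.zero_apply, Ring.lie_def] at this ⊢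
    exact this
  refine ⟨⟨mem_gSub_iff.mpr fun j => su2_bracket_mem (hxg j) (hyg j),
    LinearMap.mem_ker.mpr hker⟩, mem_gS_iff.mpr ⟨rfl, fun j hj =>
      su2_bracket_mem (hxg j) (hyg j), fun j hj => ?_⟩⟩
  show ⁅x.2 j, y.2 j⁆ = 0
  rw [hxS.2.2 j hj]; simp [Ring.lie_def]

end Aux2

/-- If `S` is an `su(2)` block for `ψ`, then `dim_ℝ (K_ψ ∩ g_S) = 3`,
`K_ψ ∩ g_S` is closed under the Lie bracket of `g`, and it is isomorphic as a real
Lie algebra to `su(2)`. -/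

theorem stmt1 {n : ℕ} (hn : 1 ≤ n) (ψ : QState n) (hψ : ψ ≠ 0)
    (S : Set (Fin n)) (hS : Su2Block ψ S) :
    Module.finrank ℝ ↥(stab ψ ⊓ gS S) = 3 ∧
    (∀ x y : GV n, x ∈ stab ψ ⊓ gS S → y ∈ stab ψ ⊓ gS S →
      gBracket x y ∈ stab ψ ⊓ gS S) ∧
    ∃ e : ↥(stab ψ ⊓ gS S) ≃ₗ[ℝ] ↥su2,
      ∀ (x y : ↥(stab ψ ⊓ gS S)) (h : gBracket x.1 y.1 ∈ stab ψ ⊓ gS S),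
        ((e ⟨gBracket x.1 y.1, h⟩ : Matrix (Fin 2) (Fin 2) ℂ)) =
          ⁅(e x : Matrix (Fin 2) (Fin 2) ℂ), (e y : Matrix (Fin 2) (Fin 2) ℂ)⁆ := by
  classical
  set K := stab ψ ⊓ gS S with hKdef
  -- S is nonempty
  have hSne : S.Nonempty := by
    rcases Set.eq_empty_or_nonempty S with h | h
    · exfalso
      have hbot : gS S = ⊥ := by
        ext x
        rw [mem_gS_iff, Submodule.mem_bot]
        constructor
        · rintro ⟨h1, _, h3⟩
          exact Prod.ext h1 (funext fun k => h3 k (by simp [h]))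
        · rintro rfl
          exact ⟨rfl, fun k hk => by simp [h] at hk, fun k _ => rfl⟩
      have h1 := hS.1
      rw [hbot, inf_bot_eq] at h1
      simp at h1
    · exact h
  obtain ⟨j, hj⟩ := hSne
  -- elements of K vanishing at qubit j are zero
  have hinj0 : ∀ z : GV n, z ∈ K → z.2 j = 0 → z = 0 := by
    intro z hz hzj
    have hz2 := mem_gS_iff.mp hz.2
    have hz' : z ∈ stab ψ ⊓ gS (S \ {j}) := by
      refine ⟨hz.1, mem_gS_iff.mpr ⟨hz2.1, fun k hk => hz2.2.1 k hk.1, fun k hk => ?_⟩⟩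
      by_cases hkS : k ∈ S
      · have : k = j := by
          by_contra hne
          exact hk ⟨hkS, hne⟩
        rw [this]; exact hzj
      · exact hz2.2.2 k hkS
    have hlt : S \ {j} ⊂ S := Set.sdiff_singleton_ssubset.mpr hj
    have h0 := hS.2 _ hlt
    have hb : stab ψ ⊓ gS (S \ {j}) = ⊥ := Submodule.finrank_eq_zero.mp h0
    rw [hb] at hz'
    exact (Submodule.mem_bot ℝ).mp hz'
  -- the restriction of P_j to K
  set f : ↥K →ₗ[ℝ] Matrix (Fin 2) (Fin 2) ℂ := (Pj j).comp K.subtype with hfdef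
  have hfapp : ∀ z : ↥K, f z = (z : GV n).2 j := fun z => rfl
  have hfinj : Function.Injective f := by
    rw [← LinearMap.ker_eq_bot, Submodule.eq_bot_iff]
    intro z hz
    exact Subtype.ext (hinj0 z.1 z.2 hz)
  have hrange_le : LinearMap.range f ≤ su2 := by
    rintro _ ⟨z, rfl⟩
    exact (mem_gS_iff.mp z.2.2).2.1 j hj
  have hbr : ∀ u v : Matrix (Fin 2) (Fin 2) ℂ, u ∈ LinearMap.range f →
      v ∈ LinearMap.range f → ⁅u, v⁆ ∈ LinearMap.range f := by
    rintro _ _ ⟨zx, rfl⟩ ⟨zy, rfl⟩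
    exact ⟨⟨gBracket zx.1 zy.1, bracket_closed ψ S zx.1 zy.1 zx.2 zy.2⟩, rfl⟩
  have hrank_eq : Module.finrank ℝ ↥K = Module.finrank ℝ ↥(LinearMap.range f) :=
    (LinearMap.finrank_range_of_inj hfinj).symm
  have h2le : 2 ≤ Module.finrank ℝ ↥(LinearMap.range f) := by
    rw [← hrank_eq]; exact hS.1
  obtain ⟨g, hg⟩ := exists_linearIndependent_of_le_finrank h2le
  have hg' : LinearIndependent ℝ
      (fun i => ((g i : Matrix (Fin 2) (Fin 2) ℂ))) :=
    hg.map' (LinearMap.range f).subtype (Submodule.ker_subtype _)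
  obtain ⟨a, ha⟩ := toSu2_surj (hrange_le (g 0).2)
  obtain ⟨b, hb⟩ := toSu2_surj (hrange_le (g 1).2)
  have hab : LinearIndependent ℝ ![a, b] := by
    apply LinearIndependent.of_comp toSu2
    have : ⇑toSu2 ∘ ![a, b] = fun i : Fin 2 => ((g i : Matrix (Fin 2) (Fin 2) ℂ)) := by
      funext i
      fin_cases i <;> simp [ha, hb]
    rw [this]
    exact hg'
  set c : Fin 3 → ℝ := crossProduct a b with hcdef
  have hc : c ≠ 0 := crossProduct_ne_zero_iff_linearIndependent.mpr hab
  set F : Fin 3 → Fin 3 → ℝ := ![(-2 : ℝ) • c, a, b] with hFdef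
  have hdet : Matrix.det ![(-2 : ℝ) • c, a, b] ≠ 0 := by
    rw [← triple_product_eq_det]
    show ((-2 : ℝ) • c) ⬝ᵥ (crossProduct a b) ≠ 0
    rw [smul_dotProduct, ← hcdef]
    simp only [smul_eq_mul, ne_eq, mul_eq_zero]
    push_neg
    exact ⟨by norm_num, fun h => hc (dotProduct_self_eq_zero.mp h)⟩
  have hF : LinearIndependent ℝ F := by
    rw [show F = fun i => (Matrix.of F) i from rfl]
    exact (Matrix.linearIndependent_rows_iff_isUnit (A := Matrix.of F)).mpr
      ((Matrix.isUnit_iff_isUnit_det _).mpr (isUnit_iff_ne_zero.mpr hdet))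
  have hG : LinearIndependent ℝ (⇑toSu2 ∘ F) :=
    hF.map' toSu2 (LinearMap.ker_eq_bot.mpr toSu2_inj)
  have hGmem : ∀ i : Fin 3, (⇑toSu2 ∘ F) i ∈ LinearMap.range f := by
    intro i
    fin_cases i
    · show toSu2 ((-2 : ℝ) • c) ∈ _
      rw [hcdef, ← toSu2_bracket, ha, hb]
      exact hbr _ _ (g 0).2 (g 1).2
    · show toSu2 a ∈ _
      rw [ha]; exact (g 0).2
    · show toSu2 b ∈ _
      rw [hb]; exact (g 1).2
  have hspan : Submodule.span ℝ (Set.range (⇑toSu2 ∘ F)) ≤ LinearMap.range f := by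
    rw [Submodule.span_le]
    rintro _ ⟨i, rfl⟩
    exact hGmem i
  have h3le : 3 ≤ Module.finrank ℝ ↥(LinearMap.range f) := by
    have := Submodule.finrank_mono hspan
    rwa [finrank_span_eq_card hG, Fintype.card_fin] at this
  have hrfeq : LinearMap.range f = su2 :=
    Submodule.eq_of_le_of_finrank_le hrange_le (by rw [finrank_su2]; exact h3le)
  have hrank3 : Module.finrank ℝ ↥K = 3 := by
    rw [hrank_eq, hrfeq, finrank_su2]
  refine ⟨hrank3, bracket_closed ψ S, ?_⟩
  -- the isomorphism
  have hcod : ∀ z : ↥K, f z ∈ su2 := fun z => hrange_le ⟨z, rfl⟩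
  set fcod : ↥K →ₗ[ℝ] ↥su2 := f.codRestrict su2 hcod with hfcod
  have hbij : Function.Bijective fcod := by
    constructor
    · intro z w h
      exact hfinj (congrArg Subtype.val h)
    · intro y
      have : (y : Matrix (Fin 2) (Fin 2) ℂ) ∈ LinearMap.range f := by
        rw [hrfeq]; exact y.2
      obtain ⟨z, hz⟩ := this
      exact ⟨z, Subtype.ext hz⟩
  refine ⟨LinearEquiv.ofBijective fcod hbij, ?_⟩
  intro x y h
  rfl
end
end
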